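/- Let A be a commutative ring equipped with a ℤ-grading 𝒜 (GradedRing 𝒜), and suppose A is periodic: there exist an integer d > 0 and a unit u of A with u ∈ 𝒜 d. Then the map sending a homogeneous prime ideal p of A to the prime ideal p ∩ 𝒜 0 of the degree-zero subring 𝒜 0 (the preimage of p under the inclusion 𝒜 0 → A) is a bijection from the set of homogeneous prime ideals of A onto the set of prime ideals of 𝒜 0; moreover this bijection and its inverse both preserve inclusions of ideals (hence it is a homeomorphism of the corresponding Zariski spectra). -/

import Mathlib

/-- The inclusion of the degree-zero subring `𝒜 0` into `A`, as a ring homomorphism. -/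
def gradeZeroInclusion {A : Type*} [CommRing A] (𝒜 : ℤ → Submodule ℤ A)
    [GradedRing 𝒜] : (𝒜 0) →+* A where
  toFun a := (a : A)
  map_one' := rfl
  map_mul' _ _ := rfl
  map_zero' := rfl
  map_add' _ _ := rfl

namespace PeriodicSpecAux

open DirectSum

variable {A : Type*} [CommRing A] (𝒜 : ℤ → Submodule ℤ A) [GradedRing 𝒜]
variable {d : ℤ} {u : Aˣ}

lemma inv_unit_mem (hu : (u : A) ∈ 𝒜 d) : ((u⁻¹ : Aˣ) : A) ∈ 𝒜 (-d) := by
  have h1 : (decompose 𝒜 ((u : A) * ((u⁻¹ : Aˣ) : A)) (d + -d) : A)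
      = (u : A) * (decompose 𝒜 ((u⁻¹ : Aˣ) : A) (-d) : A) :=
    DirectSum.coe_decompose_mul_add_of_left_mem 𝒜 hu
  rw [Units.mul_inv, add_neg_cancel, decompose_of_mem_same 𝒜 (SetLike.one_mem_graded 𝒜)] at h1
  have h2 : ((u⁻¹ : Aˣ) : A) = (decompose 𝒜 ((u⁻¹ : Aˣ) : A) (-d) : A) := by
    calc ((u⁻¹ : Aˣ) : A) = ((u⁻¹ : Aˣ) : A) * 1 := by ring
    _ = ((u⁻¹ : Aˣ) : A) * ((u : A) * (decompose 𝒜 ((u⁻¹ : Aˣ) : A) (-d) : A)) := by rw [← h1]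
    _ = (((u⁻¹ : Aˣ) : A) * (u : A)) * (decompose 𝒜 ((u⁻¹ : Aˣ) : A) (-d) : A) := by ring
    _ = (decompose 𝒜 ((u⁻¹ : Aˣ) : A) (-d) : A) := by rw [Units.inv_mul, one_mul]
  rw [h2]
  exact SetLike.coe_mem _

lemma zpow_unit_mem (hu : (u : A) ∈ 𝒜 d) (n : ℤ) : ((u ^ n : Aˣ) : A) ∈ 𝒜 (d * n) := by
  induction n using Int.induction_on with
  | zero => simpa using SetLike.one_mem_graded 𝒜
  | succ k ih =>
      have h := SetLike.mul_mem_graded ih hu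
      rw [show (u ^ ((k : ℤ) + 1) : Aˣ) = u ^ (k : ℤ) * u by rw [zpow_add_one]] at *
      rw [Units.val_mul]
      convert h using 2
      ring
  | pred k ih =>
      have h := SetLike.mul_mem_graded ih (inv_unit_mem 𝒜 hu)
      rw [show (u ^ (-(k : ℤ) - 1) : Aˣ) = u ^ (-(k : ℤ)) * u⁻¹ by
        rw [← zpow_neg_one, ← zpow_add]; ring_nf]
      rw [Units.val_mul]
      convert h using 2
      ring

/-- "`x`, an element of `A` lying in `𝒜 0`, belongs to `q`". -/
def MQ (q : Ideal (𝒜 0)) (x : A) : Prop := ∃ h : x ∈ 𝒜 0, (⟨x, h⟩ : 𝒜 0) ∈ q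

/-- The degree-zero "normalization" `x ^ d * u ^ (-i)` of a degree-`i` element `x`. -/
def Np (d : ℤ) (u : Aˣ) (i : ℤ) (x : A) : A := x ^ d.toNat * ((u ^ (-i) : Aˣ) : A)

variable {𝒜}

lemma mq_of_eq {q : Ideal (𝒜 0)} {x y : A} (hxy : x = y) (h : MQ 𝒜 q x) : MQ 𝒜 q y := hxy ▸ h

lemma mq_zero (q : Ideal (𝒜 0)) : MQ 𝒜 q 0 := ⟨zero_mem _, q.zero_mem⟩

lemma mq_add {q : Ideal (𝒜 0)} {x y : A} (hx : MQ 𝒜 q x) (hy : MQ 𝒜 q y) : MQ 𝒜 q (x + y) := by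
  obtain ⟨h1, hq1⟩ := hx; obtain ⟨h2, hq2⟩ := hy
  exact ⟨add_mem h1 h2, q.add_mem hq1 hq2⟩

lemma mem0_mul {x y : A} (hx : x ∈ 𝒜 0) (hy : y ∈ 𝒜 0) : x * y ∈ 𝒜 0 := by
  simpa using SetLike.mul_mem_graded hx hy

lemma mem0_pow {x : A} (hx : x ∈ 𝒜 0) (k : ℕ) : x ^ k ∈ 𝒜 0 := by
  induction k with
  | zero => simpa using SetLike.one_mem_graded 𝒜
  | succ n ih => rw [pow_succ]; exact mem0_mul ih hx

lemma mq_mul_left {q : Ideal (𝒜 0)} {x y : A} (hy : y ∈ 𝒜 0) (hx : MQ 𝒜 q x) :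
    MQ 𝒜 q (y * x) := by
  obtain ⟨h1, hq1⟩ := hx
  exact ⟨mem0_mul hy h1, q.mul_mem_left ⟨y, hy⟩ hq1⟩

lemma mq_mul_right {q : Ideal (𝒜 0)} {x y : A} (hx : MQ 𝒜 q x) (hy : y ∈ 𝒜 0) :
    MQ 𝒜 q (x * y) := mq_of_eq (mul_comm y x) (mq_mul_left hy hx)

lemma mq_sum {ι : Type*} {q : Ideal (𝒜 0)} {s : Finset ι} {f : ι → A}
    (h : ∀ i ∈ s, MQ 𝒜 q (f i)) : MQ 𝒜 q (∑ i ∈ s, f i) :=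
  Finset.sum_induction f (MQ 𝒜 q) (fun _ _ => mq_add) (mq_zero q) h

lemma coe_pow0 (x : 𝒜 0) (k : ℕ) : ((x ^ k : 𝒜 0) : A) = (x : A) ^ k := by
  induction k with
  | zero => rfl
  | succ n ih => rw [pow_succ, pow_succ, ← ih]; rfl

lemma mq_pow_iff {q : Ideal (𝒜 0)} (hq : q.IsPrime) {x : A} (hx : x ∈ 𝒜 0) {k : ℕ}
    (hk : k ≠ 0) : MQ 𝒜 q (x ^ k) ↔ MQ 𝒜 q x := by
  constructor
  · rintro ⟨h, hmem⟩
    refine ⟨hx, hq.mem_of_pow_mem k ?_⟩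
    have : (⟨x, hx⟩ : 𝒜 0) ^ k = ⟨x ^ k, h⟩ := Subtype.ext (coe_pow0 _ _)
    rw [this]; exact hmem
  · rintro ⟨h, hmem⟩
    refine ⟨mem0_pow hx k, ?_⟩
    have : (⟨x, hx⟩ : 𝒜 0) ^ k = (⟨x ^ k, mem0_pow hx k⟩ : 𝒜 0) := Subtype.ext (coe_pow0 _ _)
    rw [← this]
    exact q.pow_mem_of_mem hmem k (Nat.pos_of_ne_zero hk)

lemma mq_prime {q : Ideal (𝒜 0)} (hq : q.IsPrime) {x y : A} (hx : x ∈ 𝒜 0) (hy : y ∈ 𝒜 0)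
    (h : MQ 𝒜 q (x * y)) : MQ 𝒜 q x ∨ MQ 𝒜 q y := by
  obtain ⟨hm, hmem⟩ := h
  have : (⟨x, hx⟩ : 𝒜 0) * ⟨y, hy⟩ = ⟨x * y, hm⟩ := rfl
  rcases hq.mem_or_mem (this ▸ hmem) with h | h
  · exact Or.inl ⟨hx, h⟩
  · exact Or.inr ⟨hy, h⟩

lemma mq_not_one {q : Ideal (𝒜 0)} (hq : q.IsPrime) : ¬ MQ 𝒜 q 1 := by
  rintro ⟨h, hmem⟩
  have : (⟨(1 : A), h⟩ : 𝒜 0) = 1 := rfl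
  rw [this] at hmem
  exact hq.ne_top (q.eq_top_iff_one.mpr hmem)

lemma mq_neg {q : Ideal (𝒜 0)} {x : A} (hx : MQ 𝒜 q x) : MQ 𝒜 q (-x) := by
  obtain ⟨h, hmem⟩ := hx
  exact ⟨neg_mem h, q.neg_mem hmem⟩

variable (𝒜)

lemma np_mem (hd : 0 < d) (hu : (u : A) ∈ 𝒜 d) {x : A} {i : ℤ} (hx : x ∈ 𝒜 i) :
    Np d u i x ∈ 𝒜 0 := by
  have h1 := SetLike.mul_mem_graded (SetLike.pow_mem_graded d.toNat hx)
    (zpow_unit_mem 𝒜 hu (-i))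
  have h2 : d.toNat • i + d * (-i) = 0 := by
    have h3 : (d.toNat : ℤ) = d := Int.toNat_of_nonneg hd.le
    rw [nsmul_eq_mul, h3]; ring
  rwa [h2] at h1

lemma key_term' (k e : ℕ) (hk : k ≤ e) (x y w : A) :
    (x ^ k * y ^ (e - k) * w) ^ e = (x ^ e * w) ^ k * (y ^ e * w) ^ (e - k) := by
  obtain ⟨m, rfl⟩ : ∃ m, e = k + m := ⟨e - k, by omega⟩
  rw [Nat.add_sub_cancel_left]
  ring

/-- `Pp d u q i x` : `x` is a degree-`i` element whose normalization lies in `q`. -/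
def Pp (d : ℤ) (u : Aˣ) (q : Ideal (𝒜 0)) (i : ℤ) (x : A) : Prop :=
  x ∈ 𝒜 i ∧ MQ 𝒜 q (Np d u i x)

variable {q : Ideal (𝒜 0)}

lemma pp_zero (hd : 0 < d) (i : ℤ) : Pp 𝒜 d u q i 0 := by
  refine ⟨zero_mem _, mq_of_eq ?_ (mq_zero q)⟩
  rw [Np, zero_pow (by omega : d.toNat ≠ 0), zero_mul]

lemma np_mul (x y : A) (i j : ℤ) : Np d u (i + j) (x * y) = Np d u i x * Np d u j y := by
  rw [Np, Np, Np, mul_pow, show -(i+j) = -i + -j by ring, zpow_add, Units.val_mul]; ring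

lemma pp_mul_left (hd : 0 < d) (hu : (u : A) ∈ 𝒜 d) {x y : A} {i j : ℤ}
    (hx : x ∈ 𝒜 i) (hy : Pp 𝒜 d u q j y) : Pp 𝒜 d u q (i + j) (x * y) := by
  refine ⟨SetLike.mul_mem_graded hx hy.1, mq_of_eq (np_mul x y i j).symm ?_⟩
  exact mq_mul_left (np_mem 𝒜 hd hu hx) hy.2

lemma pp_mul_right (hd : 0 < d) (hu : (u : A) ∈ 𝒜 d) {x y : A} {i j : ℤ}
    (hx : Pp 𝒜 d u q i x) (hy : y ∈ 𝒜 j) : Pp 𝒜 d u q (i + j) (x * y) := by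
  have := pp_mul_left 𝒜 hd hu hy hx
  rw [add_comm j i, mul_comm y x] at this
  exact this

lemma pp_prime (hd : 0 < d) (hu : (u : A) ∈ 𝒜 d) (hq : q.IsPrime) {x y : A} {i j : ℤ}
    (hx : x ∈ 𝒜 i) (hy : y ∈ 𝒜 j) (h : Pp 𝒜 d u q (i + j) (x * y)) :
    Pp 𝒜 d u q i x ∨ Pp 𝒜 d u q j y := by
  have h2 : MQ 𝒜 q (Np d u i x * Np d u j y) := mq_of_eq (np_mul x y i j) h.2
  rcases mq_prime hq (np_mem 𝒜 hd hu hx) (np_mem 𝒜 hd hu hy) h2 with h3 | h3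
  · exact Or.inl ⟨hx, h3⟩
  · exact Or.inr ⟨hy, h3⟩

lemma pp_neg (hd : 0 < d) {x : A} {i : ℤ} (hx : Pp 𝒜 d u q i x) : Pp 𝒜 d u q i (-x) := by
  refine ⟨neg_mem hx.1, mq_of_eq (show (-1 : A) ^ d.toNat * Np d u i x = Np d u i (-x) by
    rw [Np, Np]; ring) ?_⟩
  exact mq_mul_left (mem0_pow (neg_mem (SetLike.one_mem_graded 𝒜)) d.toNat) hx.2

lemma pp_add (hd : 0 < d) (hu : (u : A) ∈ 𝒜 d) (hq : q.IsPrime) {x y : A} {i : ℤ}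
    (hx : Pp 𝒜 d u q i x) (hy : Pp 𝒜 d u q i y) : Pp 𝒜 d u q i (x + y) := by
  set e := d.toNat with he
  have he0 : e ≠ 0 := by omega
  have hed : (e : ℤ) = d := Int.toNat_of_nonneg hd.le
  refine ⟨add_mem hx.1 hy.1, ?_⟩
  set w : A := ((u ^ (-i) : Aˣ) : A) with hw
  have hsplit : Np d u i (x + y) = ∑ k ∈ Finset.range (e + 1),
      ((e.choose k : A)) * (x ^ k * y ^ (e - k) * w) := by
    rw [Np, add_pow, Finset.sum_mul]
    exact Finset.sum_congr rfl fun k _ => by ring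
  rw [hsplit]
  refine mq_sum fun k hk => ?_
  rw [Finset.mem_range] at hk
  have hkle : k ≤ e := by omega
  refine mq_mul_left (SetLike.natCast_mem_graded 𝒜 _) ?_
  by_cases hk0 : k = 0
  · subst hk0
    refine mq_of_eq ?_ hy.2
    rw [Np, pow_zero, one_mul, Nat.sub_zero]
  · have hsmem : x ^ k * y ^ (e - k) * w ∈ 𝒜 0 := by
      have h1 := SetLike.mul_mem_graded
        (SetLike.mul_mem_graded (SetLike.pow_mem_graded k hx.1)
          (SetLike.pow_mem_graded (e - k) hy.1)) (zpow_unit_mem 𝒜 hu (-i))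
      have h2 : (k • i + (e - k) • i) + d * (-i) = 0 := by
        rw [nsmul_eq_mul, nsmul_eq_mul, Nat.cast_sub hkle, hed]; ring
      rwa [h2] at h1
    rw [← mq_pow_iff hq hsmem he0]
    rw [key_term' k e hkle x y w]
    have hxw : MQ 𝒜 q ((x ^ e * w) ^ k) := by
      rw [mq_pow_iff hq (show x ^ e * w ∈ 𝒜 0 from np_mem 𝒜 hd hu hx.1) hk0]
      exact hx.2
    exact mq_mul_right hxw (mem0_pow (np_mem 𝒜 hd hu hy.1) _)

set_option maxHeartbeats 1000000 in
lemma surj_aux (hd : 0 < d) (hu : (u : A) ∈ 𝒜 d) (q : Ideal (𝒜 0)) (hq : q.IsPrime) :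
    ∃ p : Ideal A, p.IsPrime ∧ Ideal.IsHomogeneous 𝒜 p ∧
      Ideal.comap (gradeZeroInclusion 𝒜) p = q := by
  classical
  set p : Ideal A :=
    { carrier := {a | ∀ n : ℤ, Pp 𝒜 d u q n (decompose 𝒜 a n : A)}
      add_mem' := by
        intro a b ha hb n
        have h1 : (decompose 𝒜 (a + b) n : A) = (decompose 𝒜 a n : A) + (decompose 𝒜 b n : A) := by
          rw [decompose_add, DirectSum.add_apply, Submodule.coe_add]
        rw [h1]
        exact pp_add 𝒜 hd hu hq (ha n) (hb n)
      zero_mem' := by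
        intro n
        have h1 : (decompose 𝒜 (0 : A) n : A) = 0 := by
          rw [decompose_zero, DirectSum.zero_apply, Submodule.coe_zero]
        rw [h1]
        exact pp_zero 𝒜 hd n
      smul_mem' := by
        intro c a ha
        simp only [smul_eq_mul, Set.mem_setOf_eq]
        induction c using DirectSum.Decomposition.inductionOn 𝒜 with
        | zero   => intro n; rw [zero_mul]
                    have h1 : (decompose 𝒜 (0 : A) n : A) = 0 := by
                      rw [decompose_zero, DirectSum.zero_apply, Submodule.coe_zero]
                    rw [h1]; exact pp_zero 𝒜 hd n
        | @homogeneous i x =>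
            intro n
            have h1 : (decompose 𝒜 ((x : A) * a) (i + (n - i)) : A)
                = (x : A) * (decompose 𝒜 a (n - i) : A) :=
              DirectSum.coe_decompose_mul_add_of_left_mem 𝒜 x.2
            rw [show n = i + (n - i) by ring, h1]
            exact pp_mul_left 𝒜 hd hu x.2 (ha _)
        | add c c' hc hc' =>
            intro n
            have h1 : (decompose 𝒜 ((c + c') * a) n : A)
                = (decompose 𝒜 (c * a) n : A) + (decompose 𝒜 (c' * a) n : A) := by
              rw [add_mul, decompose_add, DirectSum.add_apply, Submodule.coe_add]
            rw [h1]
            exact pp_add 𝒜 hd hu hq (hc n) (hc' n) } with hp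
  have hmem : ∀ a : A, a ∈ p ↔ ∀ n : ℤ, Pp 𝒜 d u q n (decompose 𝒜 a n : A) := fun _ => Iff.rfl
  have hdz : ∀ n : ℤ, ∀ x : A, decompose 𝒜 x n = 0 → Pp 𝒜 d u q n (decompose 𝒜 x n : A) := by
    intro n x h0
    rw [h0]
    exact pp_zero 𝒜 hd n
  have hprime : p.IsPrime := by
    rw [Ideal.isPrime_iff]
    constructor
    · intro htop
      have h1 : (1 : A) ∈ p := htop ▸ Submodule.mem_top
      have h2 := (hmem 1).1 h1 0
      rw [decompose_of_mem_same 𝒜 (SetLike.one_mem_graded 𝒜)] at h2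
      have h3 : Np d u 0 (1 : A) = 1 := by rw [Np]; simp
      exact mq_not_one hq (h3 ▸ h2.2)
    · intro a b hab
      by_contra hcon
      push_neg at hcon
      obtain ⟨ha, hb⟩ := hcon
      have ha' : ¬ ∀ n : ℤ, Pp 𝒜 d u q n (decompose 𝒜 a n : A) := fun h => ha h
      have hb' : ¬ ∀ n : ℤ, Pp 𝒜 d u q n (decompose 𝒜 b n : A) := fun h => hb h
      set Ta : Finset ℤ := (decompose 𝒜 a).support.filter
        (fun n => ¬ Pp 𝒜 d u q n (decompose 𝒜 a n : A)) with hTa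
      set Tb : Finset ℤ := (decompose 𝒜 b).support.filter
        (fun n => ¬ Pp 𝒜 d u q n (decompose 𝒜 b n : A)) with hTb
      have hTane : Ta.Nonempty := by
        obtain ⟨n0, hn0⟩ := not_forall.mp ha'
        refine ⟨n0, Finset.mem_filter.mpr ⟨DFinsupp.mem_support_iff.mpr ?_, hn0⟩⟩
        intro h0
        exact hn0 (hdz n0 a h0)
      have hTbne : Tb.Nonempty := by
        obtain ⟨n0, hn0⟩ := not_forall.mp hb'
        refine ⟨n0, Finset.mem_filter.mpr ⟨DFinsupp.mem_support_iff.mpr ?_, hn0⟩⟩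
        intro h0
        exact hn0 (hdz n0 b h0)
      set m : ℤ := Ta.max' hTane with hmdef
      set n : ℤ := Tb.max' hTbne with hndef
      have hmTa : m ∈ Ta := Ta.max'_mem hTane
      have hnTb : n ∈ Tb := Tb.max'_mem hTbne
      have hma : ¬ Pp 𝒜 d u q m (decompose 𝒜 a m : A) := (Finset.mem_filter.mp hmTa).2
      have hnb : ¬ Pp 𝒜 d u q n (decompose 𝒜 b n : A) := (Finset.mem_filter.mp hnTb).2
      have hgta : ∀ i : ℤ, m < i → Pp 𝒜 d u q i (decompose 𝒜 a i : A) := by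
        intro i hi
        by_contra hPi
        have hne : decompose 𝒜 a i ≠ 0 := fun h0 => hPi (hdz i a h0)
        have : i ∈ Ta := Finset.mem_filter.mpr ⟨DFinsupp.mem_support_iff.mpr hne, hPi⟩
        have := Ta.le_max' i this
        omega
      have hgtb : ∀ j : ℤ, n < j → Pp 𝒜 d u q j (decompose 𝒜 b j : A) := by
        intro j hj
        by_contra hPj
        have hne : decompose 𝒜 b j ≠ 0 := fun h0 => hPj (hdz j b h0)
        have : j ∈ Tb := Finset.mem_filter.mpr ⟨DFinsupp.mem_support_iff.mpr hne, hPj⟩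
        have := Tb.le_max' j this
        omega
      have hab' := (hmem _).1 hab (m + n)
      set S : Finset (ℤ × ℤ) := ((decompose 𝒜 a).support ×ˢ (decompose 𝒜 b).support).filter
        (fun ij : ℤ × ℤ => ij.1 + ij.2 = m + n) with hS
      set f : ℤ × ℤ → A := fun ij => (decompose 𝒜 a ij.1 : A) * (decompose 𝒜 b ij.2 : A) with hf
      have hco : (decompose 𝒜 (a * b) (m + n) : A) = ∑ ij ∈ S, f ij := by
        rw [decompose_mul, DirectSum.coe_mul_apply]
      have hpair : (m, n) ∈ S := by
        refine Finset.mem_filter.mpr ⟨Finset.mem_product.mpr ⟨?_, ?_⟩, rfl⟩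
        · exact (Finset.mem_filter.mp hmTa).1
        · exact (Finset.mem_filter.mp hnTb).1
      have hsum : ∑ ij ∈ S.erase (m, n), f ij + f (m, n) = ∑ ij ∈ S, f ij :=
        Finset.sum_erase_add S f hpair
      have hR : Pp 𝒜 d u q (m + n) (∑ ij ∈ S.erase (m, n), f ij) := by
        refine Finset.sum_induction f (Pp 𝒜 d u q (m + n))
          (fun _ _ => pp_add 𝒜 hd hu hq) (pp_zero 𝒜 hd _) ?_
        intro ij hij
        obtain ⟨hne, hSij⟩ := Finset.mem_erase.mp hij
        obtain ⟨_, hsum12⟩ := Finset.mem_filter.mp hSij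
        rcases lt_trichotomy ij.1 m with h | h | h
        · have h2 : n < ij.2 := by omega
          have := pp_mul_left 𝒜 hd hu (SetLike.coe_mem (decompose 𝒜 a ij.1)) (hgtb ij.2 h2)
          rwa [hsum12] at this
        · exfalso
          exact hne (Prod.ext h (by omega))
        · have := pp_mul_right 𝒜 hd hu (hgta ij.1 h) (SetLike.coe_mem (decompose 𝒜 b ij.2))
          rwa [hsum12] at this
      have h5 : Pp 𝒜 d u q (m + n) (f (m, n)) := by
        have h6 : f (m, n) = (decompose 𝒜 (a * b) (m + n) : A)
            + (- ∑ ij ∈ S.erase (m, n), f ij) := by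
          rw [hco, ← hsum]; ring
        rw [h6]
        exact pp_add 𝒜 hd hu hq hab' (pp_neg 𝒜 hd hR)
      rcases pp_prime 𝒜 hd hu hq (SetLike.coe_mem (decompose 𝒜 a m))
          (SetLike.coe_mem (decompose 𝒜 b n)) h5 with h7 | h7
      · exact hma h7
      · exact hnb h7
  have hhom : Ideal.IsHomogeneous 𝒜 p := by
    intro i a haP
    intro n
    by_cases hni : n = i
    · subst hni
      rw [decompose_of_mem_same 𝒜 (SetLike.coe_mem (decompose 𝒜 a n))]
      exact (hmem a).1 haP n
    · rw [decompose_of_mem_ne 𝒜 (SetLike.coe_mem (decompose 𝒜 a i)) (Ne.symm hni)]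
      exact pp_zero 𝒜 hd n
  refine ⟨p, hprime, hhom, ?_⟩
  ext x
  simp only [Ideal.mem_comap]
  change (↑x : A) ∈ p ↔ x ∈ q
  have hNp : Np d u 0 (x : A) = (x : A) ^ d.toNat := by rw [Np]; simp
  constructor
  · intro hx
    have h0 := (hmem _).1 hx 0
    rw [decompose_of_mem_same 𝒜 x.2] at h0
    obtain ⟨_, hMQ⟩ := h0
    rw [hNp, mq_pow_iff hq x.2 (by omega : d.toNat ≠ 0)] at hMQ
    obtain ⟨h, hmemq⟩ := hMQ
    exact hmemq
  · intro hx n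
    by_cases hn : n = 0
    · subst hn
      rw [decompose_of_mem_same 𝒜 x.2]
      refine ⟨x.2, ?_⟩
      rw [hNp, mq_pow_iff hq x.2 (by omega : d.toNat ≠ 0)]
      exact ⟨x.2, hx⟩
    · rw [decompose_of_mem_ne 𝒜 x.2 (Ne.symm hn)]
      exact pp_zero 𝒜 hd n

lemma le_of_comap_le (hd : 0 < d) (hu : (u : A) ∈ 𝒜 d) {p p' : Ideal A}
    (hp : Ideal.IsHomogeneous 𝒜 p) (hp' : p'.IsPrime)
    (h : Ideal.comap (gradeZeroInclusion 𝒜) p ≤ Ideal.comap (gradeZeroInclusion 𝒜) p') :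
    p ≤ p' := by
  classical
  intro a ha
  rw [← DirectSum.sum_support_decompose 𝒜 a]
  refine Submodule.sum_mem _ fun n hn => ?_
  set x : A := (decompose 𝒜 a n : A) with hx
  have h1 : x ∈ p := hp n ha
  have hxp : x ^ d.toNat * ((u ^ (-n) : Aˣ) : A) ∈ p :=
    Ideal.mul_mem_right _ _ (Ideal.pow_mem_of_mem p h1 d.toNat (by omega))
  have hx0 : x ^ d.toNat * ((u ^ (-n) : Aˣ) : A) ∈ 𝒜 0 :=
    np_mem 𝒜 hd hu (SetLike.coe_mem (decompose 𝒜 a n))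
  have h3 : (⟨_, hx0⟩ : 𝒜 0) ∈ Ideal.comap (gradeZeroInclusion 𝒜) p := hxp
  have h5 : x ^ d.toNat * ((u ^ (-n) : Aˣ) : A) ∈ p' := h h3
  have h6 : x ^ d.toNat ∈ p' := by
    have h7 := Ideal.mul_mem_right ((u ^ n : Aˣ) : A) p' h5
    rwa [mul_assoc, ← Units.val_mul, ← zpow_add, neg_add_cancel, zpow_zero, Units.val_one,
      mul_one] at h7
  exact hp'.mem_of_pow_mem d.toNat h6

end PeriodicSpecAux

/-- Remark 2.9, `rmk:spech`.  If the `ℤ`-graded commutative ring `A`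
is periodic (it has a unit `u ∈ 𝒜 d` for some `d > 0`), then `p ↦ p ∩ 𝒜 0`
(the comap along the inclusion `𝒜 0 → A`) is an inclusion-preserving bijection — with
inclusion-preserving inverse — from the homogeneous prime ideals of `A` onto the prime
ideals of the degree-zero subring `𝒜 0`. -/
theorem periodic_spech_equiv_spec_grade_zero
    (A : Type*) [CommRing A] (𝒜 : ℤ → Submodule ℤ A) [GradedRing 𝒜]
    (d : ℤ) (hd : 0 < d) (u : Aˣ) (hu : (u : A) ∈ 𝒜 d) :
    ∃ e : {p : Ideal A // p.IsPrime ∧ Ideal.IsHomogeneous 𝒜 p} ≃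
        {q : Ideal (𝒜 0) // q.IsPrime},
      (∀ p : {p : Ideal A // p.IsPrime ∧ Ideal.IsHomogeneous 𝒜 p},
        (e p : Ideal (𝒜 0)) = Ideal.comap (gradeZeroInclusion 𝒜) (p : Ideal A)) ∧
      (∀ p p' : {p : Ideal A // p.IsPrime ∧ Ideal.IsHomogeneous 𝒜 p},
        (p : Ideal A) ≤ (p' : Ideal A) ↔ (e p : Ideal (𝒜 0)) ≤ (e p' : Ideal (𝒜 0))) := by
  classical
  have hcomapPrime : ∀ p : {p : Ideal A // p.IsPrime ∧ Ideal.IsHomogeneous 𝒜 p},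
      (Ideal.comap (gradeZeroInclusion 𝒜) (p : Ideal A)).IsPrime := fun p => by
    haveI := p.2.1
    exact Ideal.IsPrime.comap _
  set f : {p : Ideal A // p.IsPrime ∧ Ideal.IsHomogeneous 𝒜 p} →
      {q : Ideal (𝒜 0) // q.IsPrime} :=
    fun p => ⟨Ideal.comap (gradeZeroInclusion 𝒜) (p : Ideal A), hcomapPrime p⟩ with hf
  have hinj : Function.Injective f := by
    intro p p' hpp
    have h1 : Ideal.comap (gradeZeroInclusion 𝒜) (p : Ideal A)
        = Ideal.comap (gradeZeroInclusion 𝒜) (p' : Ideal A) := congrArg Subtype.val hpp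
    refine Subtype.ext (le_antisymm ?_ ?_)
    · exact PeriodicSpecAux.le_of_comap_le 𝒜 hd hu p.2.2 p'.2.1 h1.le
    · exact PeriodicSpecAux.le_of_comap_le 𝒜 hd hu p'.2.2 p.2.1 h1.ge
  have hsurj : Function.Surjective f := by
    intro q
    obtain ⟨p, h1, h2, h3⟩ := PeriodicSpecAux.surj_aux 𝒜 hd hu q.1 q.2
    exact ⟨⟨p, h1, h2⟩, Subtype.ext h3⟩
  refine ⟨Equiv.ofBijective f ⟨hinj, hsurj⟩, fun p => rfl, fun p p' => ?_⟩
  constructor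
  · intro h
    exact Ideal.comap_mono h
  · intro h
    exact PeriodicSpecAux.le_of_comap_le 𝒜 hd hu p.2.2 p'.2.1 h
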